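/- For all s ∈ ℝ and t > 0, L̂_d applied to the function (s,t) ↦ t√t (d(t)−s) Ê(s,t) equals 3 (d(t)−s) √t Ê(s,t). -/

import Mathlib

/-- The complementary error function `erfc z = (2/√π) ∫_z^∞ e^{-u²} du`. -/
noncomputable def erfc (z : ℝ) : ℝ :=
  (2 / Real.sqrt Real.pi) * ∫ u in Set.Ioi z, Real.exp (-u ^ 2)

/-- `ψ̂₀(s,t) = erfc((d(t)-s)/(2√(εt)))`. -/
noncomputable def psi0 (ε : ℝ) (d : ℝ → ℝ) (s t : ℝ) : ℝ :=
  erfc ((d t - s) / (2 * Real.sqrt (ε * t)))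

/-- `Ê(s,t) = exp(-(s-d(t))²/(4εt))`. -/
noncomputable def Ehat (ε : ℝ) (d : ℝ → ℝ) (s t : ℝ) : ℝ :=
  Real.exp (-(s - d t) ^ 2 / (4 * ε * t))

/-- The operator `L̂_d F = -ε F_ss + â(d(t),t) F_s + F_t`. -/
noncomputable def Ld (ε : ℝ) (a : ℝ → ℝ → ℝ) (d : ℝ → ℝ) (F : ℝ → ℝ → ℝ) (s t : ℝ) : ℝ :=
  -ε * iteratedDeriv 2 (fun x => F x t) s
    + a (d t) t * deriv (fun x => F x t) s
    + deriv (fun τ => F s τ) t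

/-- `Ld` applied to `(s,t) ↦ t sqrt t (d t - s) Ehat s t` equals
`3 (d t - s) sqrt t Ehat s t`, for all `s : ℝ` and `t > 0`. -/
theorem stmt_9
    (ε d₀ : ℝ) (hε : 0 < ε) (hd₀ : d₀ ∈ Set.Ioo (0 : ℝ) 1)
    (a : ℝ → ℝ → ℝ) (haC1 : ContDiff ℝ 1 (fun p : ℝ × ℝ => a p.1 p.2))
    (hapos : ∀ s t : ℝ, 0 ≤ t → 0 < a s t)
    (d : ℝ → ℝ) (hdC1 : ContDiff ℝ 1 d)
    (hdODE : ∀ t : ℝ, 0 ≤ t → HasDerivAt d (a (d t) t) t)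
    (hd0 : d 0 = d₀) :
    ∀ s t : ℝ, 0 < t →
      Ld ε a d (fun s' t' => t' * Real.sqrt t' * (d t' - s') * Ehat ε d s' t') s t
        = 3 * (d t - s) * Real.sqrt t * Ehat ε d s t := by
  intro s t ht
  have ht0 : t ≠ 0 := ne_of_gt ht
  have hε0 : ε ≠ 0 := ne_of_gt hε
  have hst : Real.sqrt t ≠ 0 := ne_of_gt (Real.sqrt_pos.mpr ht)
  have h4εt : (4:ℝ)*ε*t ≠ 0 := by positivity
  -- derivative of the exponent in the space variable
  have hg : ∀ x : ℝ, HasDerivAt (fun x' => -(x' - d t)^2/(4*ε*t)) ((d t - x)/(2*ε*t)) x := by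
    intro x
    have h := ((((hasDerivAt_id x).sub_const (d t)).pow 2).neg).div_const (4*ε*t)
    refine h.congr_deriv ?_
    push_cast
    simp only [id]
    field_simp
    ring
  have hExp : ∀ x : ℝ, HasDerivAt (fun x' => Real.exp (-(x' - d t)^2/(4*ε*t)))
      (Real.exp (-(x - d t)^2/(4*ε*t)) * ((d t - x)/(2*ε*t))) x := fun x => (hg x).exp
  -- first space derivative
  have hF1 : ∀ x : ℝ, HasDerivAt
      (fun x' => t * Real.sqrt t * (d t - x') * Real.exp (-(x' - d t)^2/(4*ε*t)))
      (t * Real.sqrt t * ((d t - x)^2/(2*ε*t) - 1) * Real.exp (-(x - d t)^2/(4*ε*t))) x := by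
    intro x
    have hu : HasDerivAt (fun x' => t * Real.sqrt t * (d t - x')) (t * Real.sqrt t * (-1)) x :=
      ((hasDerivAt_id x).const_sub (d t)).const_mul (t * Real.sqrt t)
    have h := hu.mul (hExp x)
    refine h.congr_deriv ?_
    field_simp
    ring
  have hderiv1 : (deriv (fun x' => t * Real.sqrt t * (d t - x') *
        Real.exp (-(x' - d t)^2/(4*ε*t))))
      = fun x => t * Real.sqrt t * ((d t - x)^2/(2*ε*t) - 1) *
        Real.exp (-(x - d t)^2/(4*ε*t)) :=
    funext fun x => (hF1 x).deriv
  -- second space derivative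
  have hF2 : HasDerivAt
      (fun x => t * Real.sqrt t * ((d t - x)^2/(2*ε*t) - 1) * Real.exp (-(x - d t)^2/(4*ε*t)))
      (t * Real.sqrt t * ((d t - s) * ((d t - s)^2/(4*ε^2*t^2) - 3/(2*ε*t))) *
        Real.exp (-(s - d t)^2/(4*ε*t))) s := by
    have h1 : HasDerivAt (fun x => (d t - x)^2) (((2:ℕ):ℝ)*(d t - s)^1*(-1)) s :=
      (((hasDerivAt_id s).const_sub (d t)).pow 2)
    have hu := ((h1.div_const (2*ε*t)).sub_const 1).const_mul (t*Real.sqrt t)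
    have h := hu.mul (hExp s)
    refine h.congr_deriv ?_
    push_cast
    field_simp
    ring
  -- time derivative
  have hd' : HasDerivAt d (a (d t) t) t := hdODE t ht.le
  have hnum : HasDerivAt (fun τ => -(s - d τ)^2)
      (-(((2:ℕ):ℝ)*(s - d t)^1*(0 - a (d t) t))) t :=
    (((hasDerivAt_const t s).sub hd').pow 2).neg
  have hden : HasDerivAt (fun τ => 4*ε*τ) (4*ε*1) t := (hasDerivAt_id t).const_mul (4*ε)
  have harg := hnum.div hden h4εt
  have hExpT := harg.exp
  have hts : HasDerivAt (fun τ => τ * Real.sqrt τ) (1 * Real.sqrt t + t * (1/(2*Real.sqrt t))) t :=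
    (hasDerivAt_id t).mul (Real.hasDerivAt_sqrt ht0)
  have hpre : HasDerivAt
      (fun τ => τ * Real.sqrt τ * (d τ - s) * Real.exp (-(s - d τ)^2/(4*ε*τ)))
      ((Real.sqrt t + t / (2*Real.sqrt t)) * (d t - s) * Real.exp (-(s - d t)^2/(4*ε*t))
        + t * Real.sqrt t * (a (d t) t) * Real.exp (-(s - d t)^2/(4*ε*t))
        + t * Real.sqrt t * (d t - s) * Real.exp (-(s - d t)^2/(4*ε*t)) *
          ((s - d t) * a (d t) t/(2*ε*t) + (s - d t)^2/(4*ε*t^2))) t := by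
    have h := (hts.mul (hd'.sub_const s)).mul hExpT
    refine h.congr_deriv ?_
    simp only [Pi.mul_apply, Pi.div_apply]
    push_cast
    field_simp
    ring
  -- assemble
  have h2 : iteratedDeriv 2
      (fun x' => t * Real.sqrt t * (d t - x') * Real.exp (-(x' - d t)^2/(4*ε*t)))
      = deriv (deriv (fun x' => t * Real.sqrt t * (d t - x') *
          Real.exp (-(x' - d t)^2/(4*ε*t)))) := by
    rw [iteratedDeriv_succ, iteratedDeriv_one]
  simp only [Ld, Ehat]
  rw [h2]
  simp only [hderiv1]
  rw [hF2.deriv, hpre.deriv]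
  set r := Real.sqrt t with hr
  have hr0 : r ≠ 0 := hst
  have hr2 : r ^ 2 = t := Real.sq_sqrt ht.le
  rw [← hr2]
  field_simp
  ring
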